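/- The set Σ spans ℝ^6, and moreover every subset of Σ with 26 elements spans all of ℝ^6 (a six-dimensional subspace). -/

import Mathlib

noncomputable section

/-- `ℝ^6` with the standard inner product. -/
abbrev E6V : Type := EuclideanSpace ℝ (Fin 6)

/-- Turn a plain function `Fin 6 → ℝ` into a vector of `E6V`. -/
def toE (f : Fin 6 → ℝ) : E6V := (WithLp.equiv 2 (Fin 6 → ℝ)).symm f

/-- The standard basis vector `e i`. -/
def stdE (i : Fin 6) : E6V := EuclideanSpace.single i 1

/-- The set `Φ⁺` of positive roots of `E₆`: the 20 vectors `e i ± e j` for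
`2 ≤ i < j ≤ 6` (zero-based: `1 ≤ i < j ≤ 5`), together with the 16 vectors
`(√3/2, ±1/2, ±1/2, ±1/2, ±1/2, ±1/2)` with an even number of minus signs. -/
def PhiPlus : Set E6V :=
  {v | ∃ i j : Fin 6, 0 < (i : ℕ) ∧ i < j ∧ (v = stdE i + stdE j ∨ v = stdE i - stdE j)} ∪
  {v | ∃ s : Fin 5 → ℝ, (∀ k, s k = 1 ∨ s k = -1) ∧
      Even (Finset.univ.filter (fun k => s k = -1)).card ∧
      v = toE (Fin.cons (Real.sqrt 3 / 2) (fun k => s k / 2))}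

/-- The set `Φ = Φ⁺ ∪ (−Φ⁺)` of all roots of `E₆`. -/
def Phi : Set E6V := PhiPlus ∪ (-PhiPlus)

/-- Orthogonal reflection in the vector `v`. -/
def reflectIn (v : E6V) (x : E6V) : E6V :=
  x - (2 * (inner ℝ x v : ℝ) / (inner ℝ v v : ℝ)) • v

/-- The minuscule weight `μ = ((2√3)/3, 0, 0, 0, 0, 0)`. -/
def muE6 : E6V := toE ![2 * Real.sqrt 3 / 3, 0, 0, 0, 0, 0]

/-- The 27 weights of the minuscule representation of `E₆`: everything obtained
from `μ` by applying at most two root reflections. -/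
def SigmaE6 : Set E6V :=
  {muE6} ∪ {x | ∃ v ∈ Phi, x = reflectIn v muE6} ∪
    {x | ∃ v ∈ Phi, ∃ w ∈ Phi, x = reflectIn v (reflectIn w muE6)}


/-! ### Auxiliary machinery: integer models (scaled by 6) of the roots and weights -/

abbrev Z6 : Type := ℤ × ℤ × ℤ × ℤ × ℤ × ℤ

def ziT (q r : Z6) : ℤ := 3*q.1*r.1 + q.2.1*r.2.1 + q.2.2.1*r.2.2.1 + q.2.2.2.1*r.2.2.2.1
  + q.2.2.2.2.1*r.2.2.2.2.1 + q.2.2.2.2.2*r.2.2.2.2.2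

def zsm (c : ℤ) (q : Z6) : Z6 :=
  (c*q.1, c*q.2.1, c*q.2.2.1, c*q.2.2.2.1, c*q.2.2.2.2.1, c*q.2.2.2.2.2)

def zsub (q r : Z6) : Z6 :=
  (q.1-r.1, q.2.1-r.2.1, q.2.2.1-r.2.2.1, q.2.2.2.1-r.2.2.2.1,
   q.2.2.2.2.1-r.2.2.2.2.1, q.2.2.2.2.2-r.2.2.2.2.2)

def zreflT (v x : Z6) : Z6 := zsub x (zsm ((2 * ziT x v) / ziT v v) v)

def vmem (x : Z6) : List Z6 → Bool
  | [] => false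
  | a :: l => decide (x = a) || vmem x l

lemma vmem_iff (x : Z6) : ∀ l, vmem x l = true ↔ x ∈ l
  | [] => by simp only [vmem]; simp
  | a :: l => by
    rw [show vmem x (a :: l) = (decide (x = a) || vmem x l) from rfl]
    simp only [Bool.or_eq_true, decide_eq_true_eq, vmem_iff x l, List.mem_cons]

def zfun (z : Z6) : Fin 6 → ℤ := fun k =>
  if k = 0 then z.1 else if k = 1 then z.2.1 else if k = 2 then z.2.2.1
  else if k = 3 then z.2.2.2.1 else if k = 4 then z.2.2.2.2.1 else z.2.2.2.2.2

def toZ6 (q : Fin 6 → ℤ) : Z6 := (q 0, q 1, q 2, q 3, q 4, q 5)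

lemma zfun_toZ6 (q : Fin 6 → ℤ) : zfun (toZ6 q) = q := by
  funext k; fin_cases k <;> rfl

/-- Embedding of the integer model (entries are one sixth of the integers, and the
first coordinate additionally carries a factor `√3`). -/
def zemb (q : Fin 6 → ℤ) : E6V :=
  toE fun i => if i = 0 then (q 0 : ℝ)/6 * Real.sqrt 3 else (q i : ℝ)/6

lemma toE_apply (f : Fin 6 → ℝ) (i : Fin 6) : toE f i = f i := rfl

def RZ : List Z6 := [
  (0, 6, 6, 0, 0, 0),
  (0, 6, -6, 0, 0, 0),
  (0, 6, 0, 6, 0, 0),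
  (0, 6, 0, -6, 0, 0),
  (0, 6, 0, 0, 6, 0),
  (0, 6, 0, 0, -6, 0),
  (0, 6, 0, 0, 0, 6),
  (0, 6, 0, 0, 0, -6),
  (0, 0, 6, 6, 0, 0),
  (0, 0, 6, -6, 0, 0),
  (0, 0, 6, 0, 6, 0),
  (0, 0, 6, 0, -6, 0),
  (0, 0, 6, 0, 0, 6),
  (0, 0, 6, 0, 0, -6),
  (0, 0, 0, 6, 6, 0),
  (0, 0, 0, 6, -6, 0),
  (0, 0, 0, 6, 0, 6),
  (0, 0, 0, 6, 0, -6),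
  (0, 0, 0, 0, 6, 6),
  (0, 0, 0, 0, 6, -6),
  (3, 3, 3, 3, 3, 3),
  (3, 3, 3, 3, -3, -3),
  (3, 3, 3, -3, 3, -3),
  (3, 3, 3, -3, -3, 3),
  (3, 3, -3, 3, 3, -3),
  (3, 3, -3, 3, -3, 3),
  (3, 3, -3, -3, 3, 3),
  (3, 3, -3, -3, -3, -3),
  (3, -3, 3, 3, 3, -3),
  (3, -3, 3, 3, -3, 3),
  (3, -3, 3, -3, 3, 3),
  (3, -3, 3, -3, -3, -3),
  (3, -3, -3, 3, 3, 3),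
  (3, -3, -3, 3, -3, -3),
  (3, -3, -3, -3, 3, -3),
  (3, -3, -3, -3, -3, 3),
  (0, -6, -6, 0, 0, 0),
  (0, -6, 6, 0, 0, 0),
  (0, -6, 0, -6, 0, 0),
  (0, -6, 0, 6, 0, 0),
  (0, -6, 0, 0, -6, 0),
  (0, -6, 0, 0, 6, 0),
  (0, -6, 0, 0, 0, -6),
  (0, -6, 0, 0, 0, 6),
  (0, 0, -6, -6, 0, 0),
  (0, 0, -6, 6, 0, 0),
  (0, 0, -6, 0, -6, 0),
  (0, 0, -6, 0, 6, 0),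
  (0, 0, -6, 0, 0, -6),
  (0, 0, -6, 0, 0, 6),
  (0, 0, 0, -6, -6, 0),
  (0, 0, 0, -6, 6, 0),
  (0, 0, 0, -6, 0, -6),
  (0, 0, 0, -6, 0, 6),
  (0, 0, 0, 0, -6, -6),
  (0, 0, 0, 0, -6, 6),
  (-3, -3, -3, -3, -3, -3),
  (-3, -3, -3, -3, 3, 3),
  (-3, -3, -3, 3, -3, 3),
  (-3, -3, -3, 3, 3, -3),
  (-3, -3, 3, -3, -3, 3),
  (-3, -3, 3, -3, 3, -3),
  (-3, -3, 3, 3, -3, -3),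
  (-3, -3, 3, 3, 3, 3),
  (-3, 3, -3, -3, -3, 3),
  (-3, 3, -3, -3, 3, -3),
  (-3, 3, -3, 3, -3, -3),
  (-3, 3, -3, 3, 3, 3),
  (-3, 3, 3, -3, -3, -3),
  (-3, 3, 3, -3, 3, 3),
  (-3, 3, 3, 3, -3, 3),
  (-3, 3, 3, 3, 3, -3)]

def TZ : List Z6 := [
  (-2, -6, 0, 0, 0, 0),
  (-2, 0, -6, 0, 0, 0),
  (-2, 0, 0, -6, 0, 0),
  (-2, 0, 0, 0, -6, 0),
  (-2, 0, 0, 0, 0, -6),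
  (-2, 0, 0, 0, 0, 6),
  (-2, 0, 0, 0, 6, 0),
  (-2, 0, 0, 6, 0, 0),
  (-2, 0, 6, 0, 0, 0),
  (-2, 6, 0, 0, 0, 0),
  (1, -3, -3, -3, -3, -3),
  (1, -3, -3, -3, 3, 3),
  (1, -3, -3, 3, -3, 3),
  (1, -3, -3, 3, 3, -3),
  (1, -3, 3, -3, -3, 3),
  (1, -3, 3, -3, 3, -3),
  (1, -3, 3, 3, -3, -3),
  (1, -3, 3, 3, 3, 3),
  (1, 3, -3, -3, -3, 3),
  (1, 3, -3, -3, 3, -3),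
  (1, 3, -3, 3, -3, -3),
  (1, 3, -3, 3, 3, 3),
  (1, 3, 3, -3, -3, -3),
  (1, 3, 3, -3, 3, 3),
  (1, 3, 3, 3, -3, 3),
  (1, 3, 3, 3, 3, -3),
  (4, 0, 0, 0, 0, 0)]


def AZ : List Z6 := [(4,0,0,0,0,0), (-2,6,0,0,0,0), (-2,0,6,0,0,0), (-2,0,0,6,0,0),
  (-2,0,0,0,6,0), (-2,0,0,0,0,6)]

def BZ : List Z6 := [(1,-3,-3,-3,-3,-3), (-2,-6,0,0,0,0), (-2,0,-6,0,0,0), (-2,0,0,-6,0,0),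
  (-2,0,0,0,-6,0), (-2,0,0,0,0,-6)]

set_option maxRecDepth 40000 in
lemma factMu : vmem (4,0,0,0,0,0) TZ = true := by decide

set_option maxRecDepth 1000000 in
set_option maxHeartbeats 4000000 in
lemma factR : (RZ.all fun v => decide (ziT v v = 72) && vmem (zsm (-1) v) RZ) = true := by decide

set_option maxRecDepth 4000000 in
set_option maxHeartbeats 16000000 in
lemma factT : (TZ.all fun x => RZ.all fun v => vmem (zreflT v x) TZ &&
    decide (zsm 72 (zreflT v x) = zsub (zsm 72 x) (zsm (2 * ziT x v) v))) = true := by decide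

def zee (i j : Fin 6) (sign : ℤ) : Fin 6 → ℤ :=
  fun k => 6 * (Pi.single i 1 : Fin 6 → ℤ) k + sign * 6 * (Pi.single j 1 : Fin 6 → ℤ) k

def zspin (b : Fin 5 → Bool) : Fin 6 → ℤ := Fin.cons 3 (fun k => if b k then -3 else 3)

set_option maxRecDepth 100000 in
lemma factE : ∀ i j : Fin 6, 0 < (i : ℕ) → i < j →
    (vmem (toZ6 (zee i j 1)) RZ && vmem (toZ6 (zee i j (-1))) RZ) = true := by decide

set_option maxRecDepth 100000 in
lemma factS : ∀ b0 b1 b2 b3 b4 : Bool,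
    Even ((if b0 then 1 else 0) + (if b1 then 1 else 0) + (if b2 then 1 else 0)
      + (if b3 then 1 else 0) + (if b4 then 1 else 0) : ℕ) →
    vmem (toZ6 (zspin ![b0,b1,b2,b3,b4])) RZ = true := by decide

set_option maxRecDepth 100000 in
lemma factA : (AZ.all fun z => vmem z TZ) = true := by decide

set_option maxRecDepth 100000 in
lemma factB : (BZ.all fun z => vmem z TZ) = true := by decide

set_option maxRecDepth 100000 in
lemma factDisj : (AZ.all fun a => BZ.all fun b => decide (a ≠ b)) = true := by decide

set_option maxRecDepth 100000 in
lemma factNodup : TZ.Nodup := by decide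

lemma sqrt3_sq : Real.sqrt 3 * Real.sqrt 3 = 3 := Real.mul_self_sqrt (by norm_num)

lemma sqrt3_ne : Real.sqrt 3 ≠ 0 := by positivity

lemma inner_z (a b : Z6) :
    (inner ℝ (zemb (zfun a)) (zemb (zfun b)) : ℝ) = (ziT a b : ℝ)/36 := by
  simp only [PiLp.inner_apply, RCLike.inner_apply, conj_trivial, Fin.sum_univ_six]
  simp only [zemb, toE_apply, zfun, ziT]
  norm_num
  push_cast
  linear_combination ((a.1 : ℝ) * b.1 / 36) * sqrt3_sq

lemma reflect_zemb (v x y : Z6) (hv : ziT v v = 72)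
    (h : zsm 72 y = zsub (zsm 72 x) (zsm (2 * ziT x v) v)) :
    reflectIn (zemb (zfun v)) (zemb (zfun x)) = zemb (zfun y) := by
  have h1 : (72:ℤ)*y.1 = 72*x.1 - 2*ziT x v*v.1 := congrArg Prod.fst h
  have h2 : (72:ℤ)*y.2.1 = 72*x.2.1 - 2*ziT x v*v.2.1 := congrArg (fun t => t.2.1) h
  have h3 : (72:ℤ)*y.2.2.1 = 72*x.2.2.1 - 2*ziT x v*v.2.2.1 := congrArg (fun t => t.2.2.1) h
  have h4 : (72:ℤ)*y.2.2.2.1 = 72*x.2.2.2.1 - 2*ziT x v*v.2.2.2.1 :=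
    congrArg (fun t => t.2.2.2.1) h
  have h5 : (72:ℤ)*y.2.2.2.2.1 = 72*x.2.2.2.2.1 - 2*ziT x v*v.2.2.2.2.1 :=
    congrArg (fun t => t.2.2.2.2.1) h
  have h6 : (72:ℤ)*y.2.2.2.2.2 = 72*x.2.2.2.2.2 - 2*ziT x v*v.2.2.2.2.2 :=
    congrArg (fun t => t.2.2.2.2.2) h
  have c1 : (72:ℝ)*y.1 = 72*x.1 - 2*(ziT x v : ℝ)*v.1 := by exact_mod_cast h1
  have c2 : (72:ℝ)*y.2.1 = 72*x.2.1 - 2*(ziT x v : ℝ)*v.2.1 := by exact_mod_cast h2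
  have c3 : (72:ℝ)*y.2.2.1 = 72*x.2.2.1 - 2*(ziT x v : ℝ)*v.2.2.1 := by exact_mod_cast h3
  have c4 : (72:ℝ)*y.2.2.2.1 = 72*x.2.2.2.1 - 2*(ziT x v : ℝ)*v.2.2.2.1 := by exact_mod_cast h4
  have c5 : (72:ℝ)*y.2.2.2.2.1 = 72*x.2.2.2.2.1 - 2*(ziT x v : ℝ)*v.2.2.2.2.1 := by
    exact_mod_cast h5
  have c6 : (72:ℝ)*y.2.2.2.2.2 = 72*x.2.2.2.2.2 - 2*(ziT x v : ℝ)*v.2.2.2.2.2 := by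
    exact_mod_cast h6
  unfold reflectIn
  rw [inner_z, inner_z, hv]
  ext k
  show zemb (zfun x) k - (2 * ((ziT x v : ℝ)/36) / (((72:ℤ) : ℝ)/36)) * zemb (zfun v) k
    = zemb (zfun y) k
  fin_cases k
  · show (x.1:ℝ)/6*Real.sqrt 3 - (2 * ((ziT x v : ℝ)/36) / (((72:ℤ):ℝ)/36)) * ((v.1:ℝ)/6*Real.sqrt 3)
      = (y.1:ℝ)/6*Real.sqrt 3
    push_cast
    linear_combination (-(Real.sqrt 3)/432) * c1
  · show (x.2.1:ℝ)/6 - (2 * ((ziT x v : ℝ)/36) / (((72:ℤ):ℝ)/36)) * ((v.2.1:ℝ)/6) = (y.2.1:ℝ)/6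
    push_cast; linear_combination (-(1/432) : ℝ) * c2
  · show (x.2.2.1:ℝ)/6 - (2 * ((ziT x v : ℝ)/36) / (((72:ℤ):ℝ)/36)) * ((v.2.2.1:ℝ)/6)
      = (y.2.2.1:ℝ)/6
    push_cast; linear_combination (-(1/432) : ℝ) * c3
  · show (x.2.2.2.1:ℝ)/6 - (2 * ((ziT x v : ℝ)/36) / (((72:ℤ):ℝ)/36)) * ((v.2.2.2.1:ℝ)/6)
      = (y.2.2.2.1:ℝ)/6
    push_cast; linear_combination (-(1/432) : ℝ) * c4
  · show (x.2.2.2.2.1:ℝ)/6 - (2 * ((ziT x v : ℝ)/36) / (((72:ℤ):ℝ)/36)) * ((v.2.2.2.2.1:ℝ)/6)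
      = (y.2.2.2.2.1:ℝ)/6
    push_cast; linear_combination (-(1/432) : ℝ) * c5
  · show (x.2.2.2.2.2:ℝ)/6 - (2 * ((ziT x v : ℝ)/36) / (((72:ℤ):ℝ)/36)) * ((v.2.2.2.2.2:ℝ)/6)
      = (y.2.2.2.2.2:ℝ)/6
    push_cast; linear_combination (-(1/432) : ℝ) * c6

lemma refl_step (v x : Z6) (hv : vmem v RZ = true) (hx : vmem x TZ = true) :
    reflectIn (zemb (zfun v)) (zemb (zfun x)) = zemb (zfun (zreflT v x)) ∧
      vmem (zreflT v x) TZ = true := by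
  have hvl := (vmem_iff v RZ).1 hv
  have hxl := (vmem_iff x TZ).1 hx
  have hr := List.all_eq_true.1 factR v hvl
  rw [Bool.and_eq_true, decide_eq_true_eq] at hr
  have ht := List.all_eq_true.1 (List.all_eq_true.1 factT x hxl) v hvl
  rw [Bool.and_eq_true, decide_eq_true_eq] at ht
  exact ⟨reflect_zemb v x _ hr.1 ht.2, ht.1⟩

lemma zemb_neg (z : Z6) : zemb (zfun (zsm (-1) z)) = -(zemb (zfun z)) := by
  ext k
  show zemb (zfun (zsm (-1) z)) k = -(zemb (zfun z) k)
  fin_cases k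
  · show ((zsm (-1) z).1:ℝ)/6*Real.sqrt 3 = -((z.1:ℝ)/6*Real.sqrt 3)
    show ((-1*z.1 : ℤ):ℝ)/6*Real.sqrt 3 = -((z.1:ℝ)/6*Real.sqrt 3)
    push_cast; ring
  · show ((-1*z.2.1 : ℤ):ℝ)/6 = -((z.2.1:ℝ)/6); push_cast; ring
  · show ((-1*z.2.2.1 : ℤ):ℝ)/6 = -((z.2.2.1:ℝ)/6); push_cast; ring
  · show ((-1*z.2.2.2.1 : ℤ):ℝ)/6 = -((z.2.2.2.1:ℝ)/6); push_cast; ring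
  · show ((-1*z.2.2.2.2.1 : ℤ):ℝ)/6 = -((z.2.2.2.2.1:ℝ)/6); push_cast; ring
  · show ((-1*z.2.2.2.2.2 : ℤ):ℝ)/6 = -((z.2.2.2.2.2:ℝ)/6); push_cast; ring

lemma mu_eq : muE6 = zemb (zfun ((4:ℤ),0,0,0,0,0)) := by
  ext k; fin_cases k
  · show 2*Real.sqrt 3/3 = ((4:ℤ):ℝ)/6*Real.sqrt 3; push_cast; ring
  · show (0:ℝ) = ((0:ℤ):ℝ)/6; norm_num
  · show (0:ℝ) = ((0:ℤ):ℝ)/6; norm_num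
  · show (0:ℝ) = ((0:ℤ):ℝ)/6; norm_num
  · show (0:ℝ) = ((0:ℤ):ℝ)/6; norm_num
  · show (0:ℝ) = ((0:ℤ):ℝ)/6; norm_num

lemma e_eq (i j : Fin 6) (hi : i ≠ 0) (hj : j ≠ 0) (hij : i ≠ j) (sign : ℤ) :
    stdE i + (sign : ℝ) • stdE j = zemb (zee i j sign) := by
  ext k
  show stdE i k + (sign : ℝ) * stdE j k = zemb (zee i j sign) k
  rcases eq_or_ne k 0 with rfl | hk
  · have e1 : stdE i 0 = 0 := by
      simp [stdE, EuclideanSpace.single_apply, (Ne.symm hi)]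
    have e2 : stdE j 0 = 0 := by
      simp [stdE, EuclideanSpace.single_apply, (Ne.symm hj)]
    have e3 : zee i j sign 0 = 0 := by
      simp [zee, Pi.single_eq_of_ne (Ne.symm hi), Pi.single_eq_of_ne (Ne.symm hj)]
    show stdE i 0 + (sign : ℝ) * stdE j 0 = (((zee i j sign) 0 : ℤ) : ℝ)/6 * Real.sqrt 3
    rw [e1, e2, e3]; norm_num
  · have hz : zemb (zee i j sign) k = (((zee i j sign) k : ℤ) : ℝ)/6 := by
      simp [zemb, toE_apply, hk]
    rw [hz]
    simp only [stdE, EuclideanSpace.single_apply, zee, Pi.single_apply]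
    push_cast
    split_ifs with hh1 hh2
    · exact absurd (hh1.symm.trans hh2) hij
    · push_cast; ring
    · push_cast; ring
    · push_cast; ring

lemma spin_eq (s : Fin 5 → ℝ) (b : Fin 5 → Bool) (h : ∀ k, s k = if b k then -1 else 1) :
    toE (Fin.cons (Real.sqrt 3 / 2) (fun k => s k / 2)) = zemb (zspin b) := by
  ext k
  show (Fin.cons (Real.sqrt 3 / 2) (fun k => s k / 2) : Fin 6 → ℝ) k = zemb (zspin b) k
  induction k using Fin.cases with
  | zero =>
    show Real.sqrt 3 / 2 = ((zspin b 0 : ℤ) : ℝ)/6 * Real.sqrt 3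
    show Real.sqrt 3 / 2 = ((3 : ℤ) : ℝ)/6 * Real.sqrt 3
    push_cast; ring
  | succ j =>
    have hne : Fin.succ j ≠ 0 := Fin.succ_ne_zero j
    show (Fin.cons (Real.sqrt 3 / 2) (fun k => s k / 2) : Fin 6 → ℝ) (Fin.succ j)
      = zemb (zspin b) (Fin.succ j)
    rw [Fin.cons_succ]
    show s j / 2 = if Fin.succ j = 0 then ((zspin b) (Fin.succ j) : ℝ)/6 * Real.sqrt 3
      else ((zspin b) (Fin.succ j) : ℝ)/6
    rw [if_neg hne]
    have : zspin b (Fin.succ j) = if b j then -3 else 3 := by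
      simp [zspin, Fin.cons_succ]
    rw [this, h j]
    by_cases hb : b j <;> simp [hb] <;> norm_num

lemma spin_memPhi (b : Fin 5 → Bool)
    (h : Even ((if b 0 then 1 else 0) + (if b 1 then 1 else 0) + (if b 2 then 1 else 0)
      + (if b 3 then 1 else 0) + (if b 4 then 1 else 0) : ℕ)) :
    zemb (zspin b) ∈ PhiPlus := by
  right
  refine ⟨fun k => if b k then -1 else 1, fun k => ?_, ?_, ?_⟩
  · by_cases hb : b k <;> simp [hb]
  · have heq : (Finset.univ.filter fun k => (if b k then (-1:ℝ) else 1) = -1)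
        = Finset.univ.filter (fun k => b k = true) := by
      apply Finset.filter_congr
      intro k _
      by_cases hb : b k <;> simp [hb] <;> norm_num
    rw [heq, Finset.card_filter, Fin.sum_univ_five]
    simpa using h
  · exact (spin_eq _ b (fun k => rfl)).symm

lemma phiPlus_sub : ∀ v ∈ PhiPlus, ∃ z : Z6, vmem z RZ = true ∧ v = zemb (zfun z) := by
  rintro v (⟨i, j, hi, hij, hv | hv⟩ | ⟨s, hs1, hs2, rfl⟩)
  · have hi0 : i ≠ 0 := by
      intro h; rw [h] at hi; simp at hi
    have hj0 : j ≠ 0 := by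
      intro h; rw [h] at hij; exact absurd (hi.trans (Fin.lt_def.1 hij)) (by simp)
    have hE := factE i j hi hij
    rw [Bool.and_eq_true] at hE
    refine ⟨toZ6 (zee i j 1), hE.1, ?_⟩
    rw [zfun_toZ6, hv, ← e_eq i j hi0 hj0 (ne_of_lt hij) 1]
    norm_num
  · have hi0 : i ≠ 0 := by
      intro h; rw [h] at hi; simp at hi
    have hj0 : j ≠ 0 := by
      intro h; rw [h] at hij; exact absurd (hi.trans (Fin.lt_def.1 hij)) (by simp)
    have hE := factE i j hi hij
    rw [Bool.and_eq_true] at hE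
    refine ⟨toZ6 (zee i j (-1)), hE.2, ?_⟩
    rw [zfun_toZ6, hv, ← e_eq i j hi0 hj0 (ne_of_lt hij) (-1)]
    norm_num
    rfl
  · classical
    set b : Fin 5 → Bool := fun k => decide (s k = -1) with hbdef
    have hsb : ∀ k, s k = if b k then -1 else 1 := by
      intro k
      rcases hs1 k with h | h
      · have hne : ¬ s k = -1 := by rw [h]; norm_num
        have hbf : b k = false := by simp [hbdef, hne]
        rw [h, hbf]; norm_num
      · have hbt : b k = true := by simp [hbdef, h]
        rw [h, hbt]; norm_num
    have hfil : (Finset.univ.filter fun k => s k = -1)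
        = Finset.univ.filter (fun k => b k = true) := by
      apply Finset.filter_congr
      intro k _
      simp [hbdef]
    have heven2 : Even ((if b 0 then 1 else 0) + (if b 1 then 1 else 0) + (if b 2 then 1 else 0)
        + (if b 3 then 1 else 0) + (if b 4 then 1 else 0) : ℕ) := by
      have h2 := hs2
      rw [hfil, Finset.card_filter, Fin.sum_univ_five] at h2
      simpa using h2
    have hb5 : ![b 0, b 1, b 2, b 3, b 4] = b := by
      funext k; fin_cases k <;> rfl
    refine ⟨toZ6 (zspin b), ?_, ?_⟩
    · have := factS (b 0) (b 1) (b 2) (b 3) (b 4) heven2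
      rwa [hb5] at this
    · rw [zfun_toZ6]
      exact spin_eq s b hsb

lemma phi_sub : ∀ v ∈ Phi, ∃ z : Z6, vmem z RZ = true ∧ v = zemb (zfun z) := by
  rintro v (hv | hv)
  · exact phiPlus_sub v hv
  · have h2 : -v ∈ PhiPlus := by rwa [Set.mem_neg] at hv
    obtain ⟨z, hz, he⟩ := phiPlus_sub _ h2
    have hr := List.all_eq_true.1 factR z ((vmem_iff z RZ).1 hz)
    rw [Bool.and_eq_true] at hr
    refine ⟨zsm (-1) z, hr.2, ?_⟩
    rw [zemb_neg, ← he]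
    simp

lemma sigma_sub : ∀ x ∈ SigmaE6, ∃ z : Z6, vmem z TZ = true ∧ x = zemb (zfun z) := by
  rintro x ((hx | ⟨v, hv, rfl⟩) | ⟨v, hv, w, hw, rfl⟩)
  · refine ⟨(4,0,0,0,0,0), factMu, ?_⟩
    rw [Set.mem_singleton_iff] at hx
    rw [hx, mu_eq]
  · obtain ⟨zv, hzv, rfl⟩ := phi_sub v hv
    obtain ⟨heq, hmem⟩ := refl_step zv (4,0,0,0,0,0) hzv factMu
    exact ⟨_, hmem, by rw [mu_eq, heq]⟩
  · obtain ⟨zv, hzv, rfl⟩ := phi_sub v hv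
    obtain ⟨zw, hzw, rfl⟩ := phi_sub w hw
    obtain ⟨heq1, hmem1⟩ := refl_step zw (4,0,0,0,0,0) hzw factMu
    obtain ⟨heq2, hmem2⟩ := refl_step zv (zreflT zw (4,0,0,0,0,0)) hzv hmem1
    exact ⟨_, hmem2, by rw [mu_eq, heq1, heq2]⟩

lemma zembP_inj : ∀ a b : Z6, zemb (zfun a) = zemb (zfun b) → a = b := by
  rintro ⟨a1,a2,a3,a4,a5,a6⟩ ⟨b1,b2,b3,b4,b5,b6⟩ h
  have hk : ∀ k : Fin 6, zemb (zfun (a1,a2,a3,a4,a5,a6)) k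
      = zemb (zfun (b1,b2,b3,b4,b5,b6)) k := fun k => congrArg (fun w : E6V => w k) h
  have e1 : (a1:ℝ)/6*Real.sqrt 3 = (b1:ℝ)/6*Real.sqrt 3 := hk 0
  have e2 : (a2:ℝ)/6 = (b2:ℝ)/6 := hk 1
  have e3 : (a3:ℝ)/6 = (b3:ℝ)/6 := hk 2
  have e4 : (a4:ℝ)/6 = (b4:ℝ)/6 := hk 3
  have e5 : (a5:ℝ)/6 = (b5:ℝ)/6 := hk 4
  have e6 : (a6:ℝ)/6 = (b6:ℝ)/6 := hk 5
  have f1 : (a1:ℝ) = b1 := by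
    have := mul_right_cancel₀ sqrt3_ne e1
    linarith
  simp only [Prod.mk.injEq]
  refine ⟨by exact_mod_cast f1, by exact_mod_cast (by linarith : (a2:ℝ) = b2),
    by exact_mod_cast (by linarith : (a3:ℝ) = b3),
    by exact_mod_cast (by linarith : (a4:ℝ) = b4),
    by exact_mod_cast (by linarith : (a5:ℝ) = b5),
    by exact_mod_cast (by linarith : (a6:ℝ) = b6)⟩

lemma span_top_of_std {s : Set E6V} (h : ∀ i, stdE i ∈ Submodule.span ℝ s) :
    Submodule.span ℝ s = ⊤ := by
  rw [eq_top_iff, ← (EuclideanSpace.basisFun (Fin 6) ℝ).toBasis.span_eq, Submodule.span_le]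
  rintro x ⟨i, rfl⟩
  simpa [OrthonormalBasis.coe_toBasis, EuclideanSpace.basisFun_apply, stdE] using h i

lemma idA0 : stdE 0 = (Real.sqrt 3/2) • zemb (zfun ((4:ℤ),0,0,0,0,0)) := by
  ext k
  show stdE 0 k = Real.sqrt 3/2 * zemb (zfun ((4:ℤ),0,0,0,0,0)) k
  fin_cases k
  · show (1:ℝ) = Real.sqrt 3/2 * (((4:ℤ):ℝ)/6*Real.sqrt 3)
    push_cast; linear_combination (-(1/3) : ℝ) * sqrt3_sq
  · show (0:ℝ) = Real.sqrt 3/2 * (((0:ℤ):ℝ)/6); norm_num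
  · show (0:ℝ) = Real.sqrt 3/2 * (((0:ℤ):ℝ)/6); norm_num
  · show (0:ℝ) = Real.sqrt 3/2 * (((0:ℤ):ℝ)/6); norm_num
  · show (0:ℝ) = Real.sqrt 3/2 * (((0:ℤ):ℝ)/6); norm_num
  · show (0:ℝ) = Real.sqrt 3/2 * (((0:ℤ):ℝ)/6); norm_num

lemma idA1 : stdE 1 = zemb (zfun ((-2:ℤ),6,0,0,0,0)) + (1/2 : ℝ) • zemb (zfun ((4:ℤ),0,0,0,0,0)) := by
  ext k
  show stdE 1 k = zemb (zfun ((-2:ℤ),6,0,0,0,0)) k + (1/2:ℝ) * zemb (zfun ((4:ℤ),0,0,0,0,0)) k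
  fin_cases k
  · show (0:ℝ) = ((-2:ℤ):ℝ)/6*Real.sqrt 3 + (1/2:ℝ) * (((4:ℤ):ℝ)/6*Real.sqrt 3)
    push_cast; ring
  · show (1:ℝ) = ((6:ℤ):ℝ)/6 + (1/2:ℝ) * (((0:ℤ):ℝ)/6)
    norm_num
  · show (0:ℝ) = ((0:ℤ):ℝ)/6 + (1/2:ℝ) * (((0:ℤ):ℝ)/6)
    norm_num
  · show (0:ℝ) = ((0:ℤ):ℝ)/6 + (1/2:ℝ) * (((0:ℤ):ℝ)/6)
    norm_num
  · show (0:ℝ) = ((0:ℤ):ℝ)/6 + (1/2:ℝ) * (((0:ℤ):ℝ)/6)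
    norm_num
  · show (0:ℝ) = ((0:ℤ):ℝ)/6 + (1/2:ℝ) * (((0:ℤ):ℝ)/6)
    norm_num

lemma idA2 : stdE 2 = zemb (zfun ((-2:ℤ),0,6,0,0,0)) + (1/2 : ℝ) • zemb (zfun ((4:ℤ),0,0,0,0,0)) := by
  ext k
  show stdE 2 k = zemb (zfun ((-2:ℤ),0,6,0,0,0)) k + (1/2:ℝ) * zemb (zfun ((4:ℤ),0,0,0,0,0)) k
  fin_cases k
  · show (0:ℝ) = ((-2:ℤ):ℝ)/6*Real.sqrt 3 + (1/2:ℝ) * (((4:ℤ):ℝ)/6*Real.sqrt 3)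
    push_cast; ring
  · show (0:ℝ) = ((0:ℤ):ℝ)/6 + (1/2:ℝ) * (((0:ℤ):ℝ)/6)
    norm_num
  · show (1:ℝ) = ((6:ℤ):ℝ)/6 + (1/2:ℝ) * (((0:ℤ):ℝ)/6)
    norm_num
  · show (0:ℝ) = ((0:ℤ):ℝ)/6 + (1/2:ℝ) * (((0:ℤ):ℝ)/6)
    norm_num
  · show (0:ℝ) = ((0:ℤ):ℝ)/6 + (1/2:ℝ) * (((0:ℤ):ℝ)/6)
    norm_num
  · show (0:ℝ) = ((0:ℤ):ℝ)/6 + (1/2:ℝ) * (((0:ℤ):ℝ)/6)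
    norm_num

lemma idA3 : stdE 3 = zemb (zfun ((-2:ℤ),0,0,6,0,0)) + (1/2 : ℝ) • zemb (zfun ((4:ℤ),0,0,0,0,0)) := by
  ext k
  show stdE 3 k = zemb (zfun ((-2:ℤ),0,0,6,0,0)) k + (1/2:ℝ) * zemb (zfun ((4:ℤ),0,0,0,0,0)) k
  fin_cases k
  · show (0:ℝ) = ((-2:ℤ):ℝ)/6*Real.sqrt 3 + (1/2:ℝ) * (((4:ℤ):ℝ)/6*Real.sqrt 3)
    push_cast; ring
  · show (0:ℝ) = ((0:ℤ):ℝ)/6 + (1/2:ℝ) * (((0:ℤ):ℝ)/6)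
    norm_num
  · show (0:ℝ) = ((0:ℤ):ℝ)/6 + (1/2:ℝ) * (((0:ℤ):ℝ)/6)
    norm_num
  · show (1:ℝ) = ((6:ℤ):ℝ)/6 + (1/2:ℝ) * (((0:ℤ):ℝ)/6)
    norm_num
  · show (0:ℝ) = ((0:ℤ):ℝ)/6 + (1/2:ℝ) * (((0:ℤ):ℝ)/6)
    norm_num
  · show (0:ℝ) = ((0:ℤ):ℝ)/6 + (1/2:ℝ) * (((0:ℤ):ℝ)/6)
    norm_num

lemma idA4 : stdE 4 = zemb (zfun ((-2:ℤ),0,0,0,6,0)) + (1/2 : ℝ) • zemb (zfun ((4:ℤ),0,0,0,0,0)) := by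
  ext k
  show stdE 4 k = zemb (zfun ((-2:ℤ),0,0,0,6,0)) k + (1/2:ℝ) * zemb (zfun ((4:ℤ),0,0,0,0,0)) k
  fin_cases k
  · show (0:ℝ) = ((-2:ℤ):ℝ)/6*Real.sqrt 3 + (1/2:ℝ) * (((4:ℤ):ℝ)/6*Real.sqrt 3)
    push_cast; ring
  · show (0:ℝ) = ((0:ℤ):ℝ)/6 + (1/2:ℝ) * (((0:ℤ):ℝ)/6)
    norm_num
  · show (0:ℝ) = ((0:ℤ):ℝ)/6 + (1/2:ℝ) * (((0:ℤ):ℝ)/6)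
    norm_num
  · show (0:ℝ) = ((0:ℤ):ℝ)/6 + (1/2:ℝ) * (((0:ℤ):ℝ)/6)
    norm_num
  · show (1:ℝ) = ((6:ℤ):ℝ)/6 + (1/2:ℝ) * (((0:ℤ):ℝ)/6)
    norm_num
  · show (0:ℝ) = ((0:ℤ):ℝ)/6 + (1/2:ℝ) * (((0:ℤ):ℝ)/6)
    norm_num

lemma idA5 : stdE 5 = zemb (zfun ((-2:ℤ),0,0,0,0,6)) + (1/2 : ℝ) • zemb (zfun ((4:ℤ),0,0,0,0,0)) := by
  ext k
  show stdE 5 k = zemb (zfun ((-2:ℤ),0,0,0,0,6)) k + (1/2:ℝ) * zemb (zfun ((4:ℤ),0,0,0,0,0)) k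
  fin_cases k
  · show (0:ℝ) = ((-2:ℤ):ℝ)/6*Real.sqrt 3 + (1/2:ℝ) * (((4:ℤ):ℝ)/6*Real.sqrt 3)
    push_cast; ring
  · show (0:ℝ) = ((0:ℤ):ℝ)/6 + (1/2:ℝ) * (((0:ℤ):ℝ)/6)
    norm_num
  · show (0:ℝ) = ((0:ℤ):ℝ)/6 + (1/2:ℝ) * (((0:ℤ):ℝ)/6)
    norm_num
  · show (0:ℝ) = ((0:ℤ):ℝ)/6 + (1/2:ℝ) * (((0:ℤ):ℝ)/6)
    norm_num
  · show (0:ℝ) = ((0:ℤ):ℝ)/6 + (1/2:ℝ) * (((0:ℤ):ℝ)/6)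
    norm_num
  · show (1:ℝ) = ((6:ℤ):ℝ)/6 + (1/2:ℝ) * (((0:ℤ):ℝ)/6)
    norm_num

lemma idB0 : stdE 0 = (Real.sqrt 3/3) • (zemb (zfun ((1:ℤ),-3,-3,-3,-3,-3)) - (1/2 : ℝ) • (zemb (zfun ((-2:ℤ),-6,0,0,0,0)) + zemb (zfun ((-2:ℤ),0,-6,0,0,0)) + zemb (zfun ((-2:ℤ),0,0,-6,0,0)) + zemb (zfun ((-2:ℤ),0,0,0,-6,0)) + zemb (zfun ((-2:ℤ),0,0,0,0,-6)))) := by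
  ext k
  show stdE 0 k = Real.sqrt 3/3 * (zemb (zfun ((1:ℤ),-3,-3,-3,-3,-3)) k - (1/2:ℝ) * (zemb (zfun ((-2:ℤ),-6,0,0,0,0)) k + zemb (zfun ((-2:ℤ),0,-6,0,0,0)) k + zemb (zfun ((-2:ℤ),0,0,-6,0,0)) k + zemb (zfun ((-2:ℤ),0,0,0,-6,0)) k + zemb (zfun ((-2:ℤ),0,0,0,0,-6)) k)) 
  fin_cases k
  · show (1:ℝ) = Real.sqrt 3/3 * (((1:ℤ):ℝ)/6*Real.sqrt 3 - (1/2:ℝ) * ((((-2:ℤ):ℝ)/6*Real.sqrt 3) + (((-2:ℤ):ℝ)/6*Real.sqrt 3) + (((-2:ℤ):ℝ)/6*Real.sqrt 3) + (((-2:ℤ):ℝ)/6*Real.sqrt 3) + (((-2:ℤ):ℝ)/6*Real.sqrt 3)))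
    push_cast; linear_combination (-(1/3) : ℝ) * sqrt3_sq
  · show (0:ℝ) = Real.sqrt 3/3 * (((-3:ℤ):ℝ)/6 - (1/2:ℝ) * ((((-6:ℤ):ℝ)/6) + (((0:ℤ):ℝ)/6) + (((0:ℤ):ℝ)/6) + (((0:ℤ):ℝ)/6) + (((0:ℤ):ℝ)/6)))
    push_cast; ring
  · show (0:ℝ) = Real.sqrt 3/3 * (((-3:ℤ):ℝ)/6 - (1/2:ℝ) * ((((0:ℤ):ℝ)/6) + (((-6:ℤ):ℝ)/6) + (((0:ℤ):ℝ)/6) + (((0:ℤ):ℝ)/6) + (((0:ℤ):ℝ)/6)))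
    push_cast; ring
  · show (0:ℝ) = Real.sqrt 3/3 * (((-3:ℤ):ℝ)/6 - (1/2:ℝ) * ((((0:ℤ):ℝ)/6) + (((0:ℤ):ℝ)/6) + (((-6:ℤ):ℝ)/6) + (((0:ℤ):ℝ)/6) + (((0:ℤ):ℝ)/6)))
    push_cast; ring
  · show (0:ℝ) = Real.sqrt 3/3 * (((-3:ℤ):ℝ)/6 - (1/2:ℝ) * ((((0:ℤ):ℝ)/6) + (((0:ℤ):ℝ)/6) + (((0:ℤ):ℝ)/6) + (((-6:ℤ):ℝ)/6) + (((0:ℤ):ℝ)/6)))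
    push_cast; ring
  · show (0:ℝ) = Real.sqrt 3/3 * (((-3:ℤ):ℝ)/6 - (1/2:ℝ) * ((((0:ℤ):ℝ)/6) + (((0:ℤ):ℝ)/6) + (((0:ℤ):ℝ)/6) + (((0:ℤ):ℝ)/6) + (((-6:ℤ):ℝ)/6)))
    push_cast; ring

lemma idB1 : stdE 1 = -zemb (zfun ((-2:ℤ),-6,0,0,0,0)) - (Real.sqrt 3/3) • stdE 0 := by
  ext k
  show stdE 1 k = -(zemb (zfun ((-2:ℤ),-6,0,0,0,0)) k) - Real.sqrt 3/3 * stdE 0 k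
  fin_cases k
  · show (0:ℝ) = -(((-2:ℤ):ℝ)/6*Real.sqrt 3) - Real.sqrt 3/3 * (1:ℝ)
    push_cast; ring
  · show (1:ℝ) = -(((-6:ℤ):ℝ)/6) - Real.sqrt 3/3 * (0:ℝ)
    norm_num
  · show (0:ℝ) = -(((0:ℤ):ℝ)/6) - Real.sqrt 3/3 * (0:ℝ)
    norm_num
  · show (0:ℝ) = -(((0:ℤ):ℝ)/6) - Real.sqrt 3/3 * (0:ℝ)
    norm_num
  · show (0:ℝ) = -(((0:ℤ):ℝ)/6) - Real.sqrt 3/3 * (0:ℝ)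
    norm_num
  · show (0:ℝ) = -(((0:ℤ):ℝ)/6) - Real.sqrt 3/3 * (0:ℝ)
    norm_num

lemma idB2 : stdE 2 = -zemb (zfun ((-2:ℤ),0,-6,0,0,0)) - (Real.sqrt 3/3) • stdE 0 := by
  ext k
  show stdE 2 k = -(zemb (zfun ((-2:ℤ),0,-6,0,0,0)) k) - Real.sqrt 3/3 * stdE 0 k
  fin_cases k
  · show (0:ℝ) = -(((-2:ℤ):ℝ)/6*Real.sqrt 3) - Real.sqrt 3/3 * (1:ℝ)
    push_cast; ring
  · show (0:ℝ) = -(((0:ℤ):ℝ)/6) - Real.sqrt 3/3 * (0:ℝ)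
    norm_num
  · show (1:ℝ) = -(((-6:ℤ):ℝ)/6) - Real.sqrt 3/3 * (0:ℝ)
    norm_num
  · show (0:ℝ) = -(((0:ℤ):ℝ)/6) - Real.sqrt 3/3 * (0:ℝ)
    norm_num
  · show (0:ℝ) = -(((0:ℤ):ℝ)/6) - Real.sqrt 3/3 * (0:ℝ)
    norm_num
  · show (0:ℝ) = -(((0:ℤ):ℝ)/6) - Real.sqrt 3/3 * (0:ℝ)
    norm_num

lemma idB3 : stdE 3 = -zemb (zfun ((-2:ℤ),0,0,-6,0,0)) - (Real.sqrt 3/3) • stdE 0 := by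
  ext k
  show stdE 3 k = -(zemb (zfun ((-2:ℤ),0,0,-6,0,0)) k) - Real.sqrt 3/3 * stdE 0 k
  fin_cases k
  · show (0:ℝ) = -(((-2:ℤ):ℝ)/6*Real.sqrt 3) - Real.sqrt 3/3 * (1:ℝ)
    push_cast; ring
  · show (0:ℝ) = -(((0:ℤ):ℝ)/6) - Real.sqrt 3/3 * (0:ℝ)
    norm_num
  · show (0:ℝ) = -(((0:ℤ):ℝ)/6) - Real.sqrt 3/3 * (0:ℝ)
    norm_num
  · show (1:ℝ) = -(((-6:ℤ):ℝ)/6) - Real.sqrt 3/3 * (0:ℝ)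
    norm_num
  · show (0:ℝ) = -(((0:ℤ):ℝ)/6) - Real.sqrt 3/3 * (0:ℝ)
    norm_num
  · show (0:ℝ) = -(((0:ℤ):ℝ)/6) - Real.sqrt 3/3 * (0:ℝ)
    norm_num

lemma idB4 : stdE 4 = -zemb (zfun ((-2:ℤ),0,0,0,-6,0)) - (Real.sqrt 3/3) • stdE 0 := by
  ext k
  show stdE 4 k = -(zemb (zfun ((-2:ℤ),0,0,0,-6,0)) k) - Real.sqrt 3/3 * stdE 0 k
  fin_cases k
  · show (0:ℝ) = -(((-2:ℤ):ℝ)/6*Real.sqrt 3) - Real.sqrt 3/3 * (1:ℝ)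
    push_cast; ring
  · show (0:ℝ) = -(((0:ℤ):ℝ)/6) - Real.sqrt 3/3 * (0:ℝ)
    norm_num
  · show (0:ℝ) = -(((0:ℤ):ℝ)/6) - Real.sqrt 3/3 * (0:ℝ)
    norm_num
  · show (0:ℝ) = -(((0:ℤ):ℝ)/6) - Real.sqrt 3/3 * (0:ℝ)
    norm_num
  · show (1:ℝ) = -(((-6:ℤ):ℝ)/6) - Real.sqrt 3/3 * (0:ℝ)
    norm_num
  · show (0:ℝ) = -(((0:ℤ):ℝ)/6) - Real.sqrt 3/3 * (0:ℝ)
    norm_num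

lemma idB5 : stdE 5 = -zemb (zfun ((-2:ℤ),0,0,0,0,-6)) - (Real.sqrt 3/3) • stdE 0 := by
  ext k
  show stdE 5 k = -(zemb (zfun ((-2:ℤ),0,0,0,0,-6)) k) - Real.sqrt 3/3 * stdE 0 k
  fin_cases k
  · show (0:ℝ) = -(((-2:ℤ):ℝ)/6*Real.sqrt 3) - Real.sqrt 3/3 * (1:ℝ)
    push_cast; ring
  · show (0:ℝ) = -(((0:ℤ):ℝ)/6) - Real.sqrt 3/3 * (0:ℝ)
    norm_num
  · show (0:ℝ) = -(((0:ℤ):ℝ)/6) - Real.sqrt 3/3 * (0:ℝ)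
    norm_num
  · show (0:ℝ) = -(((0:ℤ):ℝ)/6) - Real.sqrt 3/3 * (0:ℝ)
    norm_num
  · show (0:ℝ) = -(((0:ℤ):ℝ)/6) - Real.sqrt 3/3 * (0:ℝ)
    norm_num
  · show (1:ℝ) = -(((-6:ℤ):ℝ)/6) - Real.sqrt 3/3 * (0:ℝ)
    norm_num

lemma spanA (s : Set E6V) (h : ∀ z, vmem z AZ = true → zemb (zfun z) ∈ s) :
    Submodule.span ℝ s = ⊤ := by
  have m0 : zemb (zfun ((4:ℤ),0,0,0,0,0)) ∈ Submodule.span ℝ s :=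
    Submodule.subset_span (h _ (by decide))
  have m1 : zemb (zfun ((-2:ℤ),6,0,0,0,0)) ∈ Submodule.span ℝ s :=
    Submodule.subset_span (h _ (by decide))
  have m2 : zemb (zfun ((-2:ℤ),0,6,0,0,0)) ∈ Submodule.span ℝ s :=
    Submodule.subset_span (h _ (by decide))
  have m3 : zemb (zfun ((-2:ℤ),0,0,6,0,0)) ∈ Submodule.span ℝ s :=
    Submodule.subset_span (h _ (by decide))
  have m4 : zemb (zfun ((-2:ℤ),0,0,0,6,0)) ∈ Submodule.span ℝ s :=
    Submodule.subset_span (h _ (by decide))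
  have m5 : zemb (zfun ((-2:ℤ),0,0,0,0,6)) ∈ Submodule.span ℝ s :=
    Submodule.subset_span (h _ (by decide))
  have h0 : stdE 0 ∈ Submodule.span ℝ s := by
    rw [idA0]; exact Submodule.smul_mem _ _ m0
  have h1 : stdE 1 ∈ Submodule.span ℝ s := by
    rw [idA1]; exact Submodule.add_mem _ m1 (Submodule.smul_mem _ _ m0)
  have h2 : stdE 2 ∈ Submodule.span ℝ s := by
    rw [idA2]; exact Submodule.add_mem _ m2 (Submodule.smul_mem _ _ m0)
  have h3 : stdE 3 ∈ Submodule.span ℝ s := by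
    rw [idA3]; exact Submodule.add_mem _ m3 (Submodule.smul_mem _ _ m0)
  have h4 : stdE 4 ∈ Submodule.span ℝ s := by
    rw [idA4]; exact Submodule.add_mem _ m4 (Submodule.smul_mem _ _ m0)
  have h5 : stdE 5 ∈ Submodule.span ℝ s := by
    rw [idA5]; exact Submodule.add_mem _ m5 (Submodule.smul_mem _ _ m0)
  apply span_top_of_std
  intro i
  fin_cases i
  · exact h0
  · exact h1
  · exact h2
  · exact h3
  · exact h4
  · exact h5

lemma spanB (s : Set E6V) (h : ∀ z, vmem z BZ = true → zemb (zfun z) ∈ s) :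
    Submodule.span ℝ s = ⊤ := by
  have m0 : zemb (zfun ((1:ℤ),-3,-3,-3,-3,-3)) ∈ Submodule.span ℝ s :=
    Submodule.subset_span (h _ (by decide))
  have m1 : zemb (zfun ((-2:ℤ),-6,0,0,0,0)) ∈ Submodule.span ℝ s :=
    Submodule.subset_span (h _ (by decide))
  have m2 : zemb (zfun ((-2:ℤ),0,-6,0,0,0)) ∈ Submodule.span ℝ s :=
    Submodule.subset_span (h _ (by decide))
  have m3 : zemb (zfun ((-2:ℤ),0,0,-6,0,0)) ∈ Submodule.span ℝ s :=
    Submodule.subset_span (h _ (by decide))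
  have m4 : zemb (zfun ((-2:ℤ),0,0,0,-6,0)) ∈ Submodule.span ℝ s :=
    Submodule.subset_span (h _ (by decide))
  have m5 : zemb (zfun ((-2:ℤ),0,0,0,0,-6)) ∈ Submodule.span ℝ s :=
    Submodule.subset_span (h _ (by decide))
  have h0 : stdE 0 ∈ Submodule.span ℝ s := by
    rw [idB0]
    exact Submodule.smul_mem _ _ (Submodule.sub_mem _ m0 (Submodule.smul_mem _ _
      (Submodule.add_mem _ (Submodule.add_mem _ (Submodule.add_mem _
        (Submodule.add_mem _ m1 m2) m3) m4) m5)))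
  have h1 : stdE 1 ∈ Submodule.span ℝ s := by
    rw [idB1]
    exact Submodule.sub_mem _ (Submodule.neg_mem _ m1) (Submodule.smul_mem _ _ h0)
  have h2 : stdE 2 ∈ Submodule.span ℝ s := by
    rw [idB2]
    exact Submodule.sub_mem _ (Submodule.neg_mem _ m2) (Submodule.smul_mem _ _ h0)
  have h3 : stdE 3 ∈ Submodule.span ℝ s := by
    rw [idB3]
    exact Submodule.sub_mem _ (Submodule.neg_mem _ m3) (Submodule.smul_mem _ _ h0)
  have h4 : stdE 4 ∈ Submodule.span ℝ s := by
    rw [idB4]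
    exact Submodule.sub_mem _ (Submodule.neg_mem _ m4) (Submodule.smul_mem _ _ h0)
  have h5 : stdE 5 ∈ Submodule.span ℝ s := by
    rw [idB5]
    exact Submodule.sub_mem _ (Submodule.neg_mem _ m5) (Submodule.smul_mem _ _ h0)
  apply span_top_of_std
  intro i
  fin_cases i
  · exact h0
  · exact h1
  · exact h2
  · exact h3
  · exact h4
  · exact h5

lemma memA1 : zemb (zfun ((-2:ℤ),6,0,0,0,0)) ∈ SigmaE6 := by
  have hw : zemb (zfun ((3:ℤ),-3,3,3,3,-3)) ∈ PhiPlus := by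
    have hzs : zspin ![true,false,false,false,true] = zfun ((3:ℤ),-3,3,3,3,-3) := by
      funext k; fin_cases k <;> rfl
    have := spin_memPhi ![true,false,false,false,true] (by decide)
    rwa [hzs] at this
  have hv : zemb (zfun ((3:ℤ),-3,-3,-3,-3,3)) ∈ PhiPlus := by
    have hzs : zspin ![true,true,true,true,false] = zfun ((3:ℤ),-3,-3,-3,-3,3) := by
      funext k; fin_cases k <;> rfl
    have := spin_memPhi ![true,true,true,true,false] (by decide)
    rwa [hzs] at this
  have e1 : reflectIn (zemb (zfun ((3:ℤ),-3,3,3,3,-3))) (zemb (zfun ((4:ℤ),0,0,0,0,0)))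
      = zemb (zfun ((1:ℤ),3,-3,-3,-3,3)) :=
    reflect_zemb _ _ _ (by decide) (by decide)
  have e2 : reflectIn (zemb (zfun ((3:ℤ),-3,-3,-3,-3,3))) (zemb (zfun ((1:ℤ),3,-3,-3,-3,3)))
      = zemb (zfun ((-2:ℤ),6,0,0,0,0)) :=
    reflect_zemb _ _ _ (by decide) (by decide)
  right
  exact ⟨_, Or.inl hv, _, Or.inl hw, by rw [mu_eq, e1, e2]⟩

lemma memA2 : zemb (zfun ((-2:ℤ),0,6,0,0,0)) ∈ SigmaE6 := by
  have hw : zemb (zfun ((3:ℤ),3,-3,3,3,-3)) ∈ PhiPlus := by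
    have hzs : zspin ![false,true,false,false,true] = zfun ((3:ℤ),3,-3,3,3,-3) := by
      funext k; fin_cases k <;> rfl
    have := spin_memPhi ![false,true,false,false,true] (by decide)
    rwa [hzs] at this
  have hv : zemb (zfun ((3:ℤ),-3,-3,-3,-3,3)) ∈ PhiPlus := by
    have hzs : zspin ![true,true,true,true,false] = zfun ((3:ℤ),-3,-3,-3,-3,3) := by
      funext k; fin_cases k <;> rfl
    have := spin_memPhi ![true,true,true,true,false] (by decide)
    rwa [hzs] at this
  have e1 : reflectIn (zemb (zfun ((3:ℤ),3,-3,3,3,-3))) (zemb (zfun ((4:ℤ),0,0,0,0,0)))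
      = zemb (zfun ((1:ℤ),-3,3,-3,-3,3)) :=
    reflect_zemb _ _ _ (by decide) (by decide)
  have e2 : reflectIn (zemb (zfun ((3:ℤ),-3,-3,-3,-3,3))) (zemb (zfun ((1:ℤ),-3,3,-3,-3,3)))
      = zemb (zfun ((-2:ℤ),0,6,0,0,0)) :=
    reflect_zemb _ _ _ (by decide) (by decide)
  right
  exact ⟨_, Or.inl hv, _, Or.inl hw, by rw [mu_eq, e1, e2]⟩

lemma memA3 : zemb (zfun ((-2:ℤ),0,0,6,0,0)) ∈ SigmaE6 := by
  have hw : zemb (zfun ((3:ℤ),3,3,-3,3,-3)) ∈ PhiPlus := by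
    have hzs : zspin ![false,false,true,false,true] = zfun ((3:ℤ),3,3,-3,3,-3) := by
      funext k; fin_cases k <;> rfl
    have := spin_memPhi ![false,false,true,false,true] (by decide)
    rwa [hzs] at this
  have hv : zemb (zfun ((3:ℤ),-3,-3,-3,-3,3)) ∈ PhiPlus := by
    have hzs : zspin ![true,true,true,true,false] = zfun ((3:ℤ),-3,-3,-3,-3,3) := by
      funext k; fin_cases k <;> rfl
    have := spin_memPhi ![true,true,true,true,false] (by decide)
    rwa [hzs] at this
  have e1 : reflectIn (zemb (zfun ((3:ℤ),3,3,-3,3,-3))) (zemb (zfun ((4:ℤ),0,0,0,0,0)))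
      = zemb (zfun ((1:ℤ),-3,-3,3,-3,3)) :=
    reflect_zemb _ _ _ (by decide) (by decide)
  have e2 : reflectIn (zemb (zfun ((3:ℤ),-3,-3,-3,-3,3))) (zemb (zfun ((1:ℤ),-3,-3,3,-3,3)))
      = zemb (zfun ((-2:ℤ),0,0,6,0,0)) :=
    reflect_zemb _ _ _ (by decide) (by decide)
  right
  exact ⟨_, Or.inl hv, _, Or.inl hw, by rw [mu_eq, e1, e2]⟩

lemma memA4 : zemb (zfun ((-2:ℤ),0,0,0,6,0)) ∈ SigmaE6 := by
  have hw : zemb (zfun ((3:ℤ),3,3,3,-3,-3)) ∈ PhiPlus := by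
    have hzs : zspin ![false,false,false,true,true] = zfun ((3:ℤ),3,3,3,-3,-3) := by
      funext k; fin_cases k <;> rfl
    have := spin_memPhi ![false,false,false,true,true] (by decide)
    rwa [hzs] at this
  have hv : zemb (zfun ((3:ℤ),-3,-3,-3,-3,3)) ∈ PhiPlus := by
    have hzs : zspin ![true,true,true,true,false] = zfun ((3:ℤ),-3,-3,-3,-3,3) := by
      funext k; fin_cases k <;> rfl
    have := spin_memPhi ![true,true,true,true,false] (by decide)
    rwa [hzs] at this
  have e1 : reflectIn (zemb (zfun ((3:ℤ),3,3,3,-3,-3))) (zemb (zfun ((4:ℤ),0,0,0,0,0)))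
      = zemb (zfun ((1:ℤ),-3,-3,-3,3,3)) :=
    reflect_zemb _ _ _ (by decide) (by decide)
  have e2 : reflectIn (zemb (zfun ((3:ℤ),-3,-3,-3,-3,3))) (zemb (zfun ((1:ℤ),-3,-3,-3,3,3)))
      = zemb (zfun ((-2:ℤ),0,0,0,6,0)) :=
    reflect_zemb _ _ _ (by decide) (by decide)
  right
  exact ⟨_, Or.inl hv, _, Or.inl hw, by rw [mu_eq, e1, e2]⟩

lemma memA5 : zemb (zfun ((-2:ℤ),0,0,0,0,6)) ∈ SigmaE6 := by
  have hw : zemb (zfun ((3:ℤ),3,3,3,-3,-3)) ∈ PhiPlus := by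
    have hzs : zspin ![false,false,false,true,true] = zfun ((3:ℤ),3,3,3,-3,-3) := by
      funext k; fin_cases k <;> rfl
    have := spin_memPhi ![false,false,false,true,true] (by decide)
    rwa [hzs] at this
  have hv : zemb (zfun ((3:ℤ),-3,-3,-3,3,-3)) ∈ PhiPlus := by
    have hzs : zspin ![true,true,true,false,true] = zfun ((3:ℤ),-3,-3,-3,3,-3) := by
      funext k; fin_cases k <;> rfl
    have := spin_memPhi ![true,true,true,false,true] (by decide)
    rwa [hzs] at this
  have e1 : reflectIn (zemb (zfun ((3:ℤ),3,3,3,-3,-3))) (zemb (zfun ((4:ℤ),0,0,0,0,0)))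
      = zemb (zfun ((1:ℤ),-3,-3,-3,3,3)) :=
    reflect_zemb _ _ _ (by decide) (by decide)
  have e2 : reflectIn (zemb (zfun ((3:ℤ),-3,-3,-3,3,-3))) (zemb (zfun ((1:ℤ),-3,-3,-3,3,3)))
      = zemb (zfun ((-2:ℤ),0,0,0,0,6)) :=
    reflect_zemb _ _ _ (by decide) (by decide)
  right
  exact ⟨_, Or.inl hv, _, Or.inl hw, by rw [mu_eq, e1, e2]⟩

/-- `Σ` spans `ℝ⁶`, and every 26-element subset of `Σ` also spans all of `ℝ⁶`. -/
theorem e6_sigma_spans :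
    Submodule.span ℝ SigmaE6 = ⊤ ∧
    ∀ s ⊆ SigmaE6, s.ncard = 26 → Submodule.span ℝ s = ⊤ := by
  constructor
  · apply spanA
    intro z hz
    have hz' := (vmem_iff z AZ).1 hz
    simp only [AZ, List.mem_cons, List.not_mem_nil, or_false] at hz'
    rcases hz' with rfl|rfl|rfl|rfl|rfl|rfl
    · exact Or.inl (Or.inl mu_eq.symm)
    · exact memA1
    · exact memA2
    · exact memA3
    · exact memA4
    · exact memA5
  · intro s hs hcard
    classical
    set U : Set E6V := (fun z : Z6 => zemb (zfun z)) '' (TZ.toFinset : Set Z6) with hU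
    have hsU : s ⊆ U := by
      intro x hx
      obtain ⟨z, hz1, hz2⟩ := sigma_sub x (hs hx)
      exact ⟨z, by simpa [List.mem_toFinset] using (vmem_iff z TZ).1 hz1, hz2.symm⟩
    have hUfin : U.Finite := ((TZ.toFinset : Set Z6).toFinite).image _
    have hinj : Function.Injective (fun z : Z6 => zemb (zfun z)) := fun a b hab =>
      zembP_inj a b hab
    have hUcard : U.ncard = 27 := by
      rw [hU, Set.ncard_image_of_injective _ hinj, Set.ncard_coe_finset,
        List.toFinset_card_of_nodup factNodup]
      rfl
    have hdiff : (U \ s).ncard = 1 := by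
      rw [Set.ncard_diff hsU (hUfin.subset hsU), hUcard, hcard]
    obtain ⟨x0, hx0⟩ := Set.ncard_eq_one.1 hdiff
    have key : (∀ z, vmem z AZ = true → zemb (zfun z) ∈ s) ∨
        (∀ z, vmem z BZ = true → zemb (zfun z) ∈ s) := by
      by_contra hcon
      push_neg at hcon
      obtain ⟨⟨za, hza, hna⟩, ⟨zb, hzb, hnb⟩⟩ := hcon
      have hzaA := (vmem_iff za AZ).1 hza
      have hzbB := (vmem_iff zb BZ).1 hzb
      have haT : vmem za TZ = true := List.all_eq_true.1 factA za hzaA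
      have hbT : vmem zb TZ = true := List.all_eq_true.1 factB zb hzbB
      have haU : zemb (zfun za) ∈ U :=
        ⟨za, by simpa [List.mem_toFinset] using (vmem_iff za TZ).1 haT, rfl⟩
      have hbU : zemb (zfun zb) ∈ U :=
        ⟨zb, by simpa [List.mem_toFinset] using (vmem_iff zb TZ).1 hbT, rfl⟩
      have ha0 : zemb (zfun za) = x0 := by
        have : zemb (zfun za) ∈ U \ s := ⟨haU, hna⟩
        rw [hx0] at this
        exact this
      have hb0 : zemb (zfun zb) = x0 := by
        have : zemb (zfun zb) ∈ U \ s := ⟨hbU, hnb⟩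
        rw [hx0] at this
        exact this
      have hab : za = zb := zembP_inj _ _ (ha0.trans hb0.symm)
      have hne := List.all_eq_true.1 (List.all_eq_true.1 factDisj za hzaA) zb hzbB
      rw [decide_eq_true_eq] at hne
      exact hne hab
    rcases key with h | h
    · exact spanA s h
    · exact spanB s h

end
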